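/- Gradient descent with exact line search converges linearly in function values: if w^{(t+1)} = w^{(t)} − d^{(t)} ∇f(w^{(t)}) with d^{(t)} = ‖∇f(w^{(t)})‖² / (∇f(w^{(t)})ᵀ(Q + βI)∇f(w^{(t)})) whenever ∇f(w^{(t)}) ≠ 0 (and w^{(t+1)} = w^{(t)} otherwise), then for every t ≥ 0, f(w^{(t+1)}) − f(w*) ≤ (1 − (σ_min(Q) + β)/(σ_max(Q) + β)) · (f(w^{(t)}) − f(w*)), where w* = (Q + βI)⁻¹k is the unique minimizer of f. Consequently f(w^{(t)}) → f(w*) as t → ∞. -/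

import Mathlib

open Matrix

lemma poly_psd {n : ℕ} {Q : Matrix (Fin n) (Fin n) ℝ} (hQ : Q.IsHermitian)
    (a b c : ℝ)
    (h : ∀ i, 0 ≤ a * hQ.eigenvalues i ^ 2 + b * hQ.eigenvalues i + c) :
    (a • (Q * Q) + b • Q + c • (1 : Matrix (Fin n) (Fin n) ℝ)).PosSemidef := by
  set U : Matrix (Fin n) (Fin n) ℝ := (hQ.eigenvectorUnitary : Matrix (Fin n) (Fin n) ℝ) with hU
  have hUU : star U * U = 1 := mem_unitaryGroup_iff'.mp hQ.eigenvectorUnitary.2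
  have hUU' : U * star U = 1 := mem_unitaryGroup_iff.mp hQ.eigenvectorUnitary.2
  set D : Matrix (Fin n) (Fin n) ℝ := diagonal hQ.eigenvalues with hD
  have hspec : Q = U * D * star U := by
    have := hQ.spectral_theorem
    rwa [show (RCLike.ofReal ∘ hQ.eigenvalues : Fin n → ℝ) = hQ.eigenvalues from
      funext fun i => by simp [RCLike.ofReal_real_eq_id]] at this
  set φ : Fin n → ℝ := fun i => a * hQ.eigenvalues i ^ 2 + b * hQ.eigenvalues i + c with hφ
  have key : a • (Q * Q) + b • Q + c • (1 : Matrix (Fin n) (Fin n) ℝ)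
      = U * diagonal φ * star U := by
    have hQQ : Q * Q = U * (D * D) * star U := by
      rw [hspec]
      calc U * D * star U * (U * D * star U)
          = U * (D * ((star U * U) * (D * star U))) := by noncomm_ring
        _ = U * (D * D) * star U := by rw [hUU]; noncomm_ring
    have h1 : (1 : Matrix (Fin n) (Fin n) ℝ) = U * 1 * star U := by
      rw [mul_one, hUU']
    have hdiag : a • (D * D) + b • D + c • (1 : Matrix (Fin n) (Fin n) ℝ) = diagonal φ := by
      ext i j
      rcases eq_or_ne i j with rfl | hij
      · simp only [hD, hφ, diagonal_mul_diagonal, Matrix.add_apply, Matrix.smul_apply,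
          Matrix.diagonal_apply_eq, Matrix.one_apply_eq, smul_eq_mul, mul_one]
        ring
      · simp only [hD, diagonal_mul_diagonal, Matrix.add_apply, Matrix.smul_apply,
          Matrix.diagonal_apply_ne _ hij, Matrix.one_apply_ne hij, smul_eq_mul,
          mul_zero, add_zero]
    rw [hQQ, hspec, h1, ← hdiag]
    simp only [Matrix.mul_add, Matrix.add_mul, mul_smul_comm, smul_mul_assoc]
  rw [key]
  exact (posSemidef_diagonal_iff.mpr h).mul_mul_conjTranspose_same U

theorem gradient_descent_linear_convergence
    (n : ℕ) (Q : Matrix (Fin n) (Fin n) ℝ) (hQ : Q.PosSemidef)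
    (β : ℝ) (hβ : 0 < β) (k : Fin n → ℝ)
    (f : (Fin n → ℝ) → ℝ)
    (hf : ∀ w, f w = (1 / 2) * (w ⬝ᵥ (Q + β • 1).mulVec w) - w ⬝ᵥ k)
    (σmax σmin : ℝ)
    (hσmaxmem : ∃ i, hQ.isHermitian.eigenvalues i = σmax)
    (hσmaxub : ∀ i, hQ.isHermitian.eigenvalues i ≤ σmax)
    (hσminmem : ∃ i, hQ.isHermitian.eigenvalues i = σmin)
    (hσminlb : ∀ i, σmin ≤ hQ.isHermitian.eigenvalues i)
    (w : ℕ → (Fin n → ℝ))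
    (hw : ∀ t, ((Q + β • 1).mulVec (w t) - k ≠ 0 →
        w (t + 1) = w t -
          ((((Q + β • 1).mulVec (w t) - k) ⬝ᵥ ((Q + β • 1).mulVec (w t) - k)) /
            (((Q + β • 1).mulVec (w t) - k) ⬝ᵥ
              (Q + β • 1).mulVec ((Q + β • 1).mulVec (w t) - k))) •
            ((Q + β • 1).mulVec (w t) - k)) ∧
      ((Q + β • 1).mulVec (w t) - k = 0 → w (t + 1) = w t)) :
    (∀ t, f (w (t + 1)) - f ((Q + β • 1)⁻¹.mulVec k)
        ≤ (1 - (σmin + β) / (σmax + β)) * (f (w t) - f ((Q + β • 1)⁻¹.mulVec k))) ∧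
    Filter.Tendsto (fun t => f (w t)) Filter.atTop
      (nhds (f ((Q + β • 1)⁻¹.mulVec k))) := by
  obtain ⟨i0, hi0⟩ := hσminmem
  have hσmin0 : 0 ≤ σmin := hi0 ▸ hQ.eigenvalues_nonneg i0
  have hσminmax : σmin ≤ σmax := hi0 ▸ hσmaxub i0
  have hmpos : (0:ℝ) < σmin + β := by linarith
  have hMpos : (0:ℝ) < σmax + β := by linarith
  set A : Matrix (Fin n) (Fin n) ℝ := Q + β • 1 with hA
  have hQH := hQ.isHermitian
  have hAH : A.IsHermitian := by
    rw [hA]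
    exact hQH.add (by simp [Matrix.IsHermitian])
  -- dot products over ℝ : basic expansions
  have hAx : ∀ x : Fin n → ℝ, A *ᵥ x = Q *ᵥ x + β • x := by
    intro x; rw [hA, add_mulVec, smul_mulVec, one_mulVec]
  have hdotA : ∀ x : Fin n → ℝ, x ⬝ᵥ A *ᵥ x = x ⬝ᵥ Q *ᵥ x + β * (x ⬝ᵥ x) := by
    intro x; rw [hAx, dotProduct_add, dotProduct_smul, smul_eq_mul]
  have hApd : A.PosDef := by
    refine Matrix.PosDef.of_dotProduct_mulVec_pos hAH ?_
    intro x hx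
    have h1 := hQ.dotProduct_mulVec_nonneg x
    rw [star_trivial] at h1 ⊢
    have h2 : (0:ℝ) < x ⬝ᵥ x := by
      rcases (Finset.sum_nonneg fun i _ => mul_self_nonneg (x i) :
        (0:ℝ) ≤ x ⬝ᵥ x).lt_or_eq with h | h
      · exact h
      · exact absurd (dotProduct_self_eq_zero.mp h.symm) hx
    have := hdotA x
    nlinarith
  have hdet : IsUnit A.det := A.isUnit_iff_isUnit_det.mp hApd.isUnit
  set ws : Fin n → ℝ := A⁻¹.mulVec k with hws
  have hAws : A *ᵥ ws = k := by
    rw [hws, mulVec_mulVec, Matrix.mul_nonsing_inv _ hdet, one_mulVec]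
  -- symmetry of the bilinear form
  have hAT : Aᵀ = A := by
    have := hAH.eq
    rwa [conjTranspose_eq_transpose_of_trivial] at this
  have hsymm : ∀ x y : Fin n → ℝ, x ⬝ᵥ A *ᵥ y = y ⬝ᵥ A *ᵥ x := by
    intro x y
    rw [dotProduct_mulVec x A y, ← mulVec_transpose, hAT, dotProduct_comm]
  -- generic quadratic-form expansion for polynomial matrices
  have hdotP : ∀ (a b c : ℝ) (x : Fin n → ℝ),
      x ⬝ᵥ (a • (Q * Q) + b • Q + c • (1 : Matrix (Fin n) (Fin n) ℝ)) *ᵥ x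
        = a * (x ⬝ᵥ (Q * Q) *ᵥ x) + b * (x ⬝ᵥ Q *ᵥ x) + c * (x ⬝ᵥ x) := by
    intro a b c x
    rw [add_mulVec, add_mulVec, smul_mulVec, smul_mulVec, smul_mulVec,
      one_mulVec, dotProduct_add, dotProduct_add, dotProduct_smul, dotProduct_smul,
      dotProduct_smul, smul_eq_mul, smul_eq_mul, smul_eq_mul]
  have hdotA2 : ∀ x : Fin n → ℝ, x ⬝ᵥ A *ᵥ (A *ᵥ x)
      = x ⬝ᵥ (Q * Q) *ᵥ x + 2 * β * (x ⬝ᵥ Q *ᵥ x) + β ^ 2 * (x ⬝ᵥ x) := by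
    intro x
    have e : A *ᵥ (A *ᵥ x) = ((Q * Q) *ᵥ x + β • (Q *ᵥ x)) + (β • (Q *ᵥ x) + (β * β) • x) := by
      rw [hAx x, hAx, mulVec_add, mulVec_smul, mulVec_mulVec, smul_add, smul_smul]
    rw [e]
    simp only [dotProduct_add, dotProduct_smul, smul_eq_mul]
    ring
  -- spectral inequalities
  have L1 : ∀ x : Fin n → ℝ, x ⬝ᵥ A *ᵥ x ≤ (σmax + β) * (x ⬝ᵥ x) := by
    intro x
    have hp := (poly_psd hQH 0 (-1) σmax (fun i => by nlinarith [hσmaxub i])).dotProduct_mulVec_nonneg x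
    rw [star_trivial, hdotP] at hp
    have := hdotA x
    nlinarith
  have L2 : ∀ x : Fin n → ℝ, (σmin + β) * (x ⬝ᵥ A *ᵥ x) ≤ x ⬝ᵥ A *ᵥ (A *ᵥ x) := by
    intro x
    have hp := (poly_psd hQH 1 (β - σmin) (-(σmin * β)) (fun i => by
      nlinarith [mul_nonneg (sub_nonneg.mpr (hσminlb i))
        (show (0:ℝ) ≤ hQH.eigenvalues i + β by nlinarith [hQ.eigenvalues_nonneg i])])).dotProduct_mulVec_nonneg x
    rw [star_trivial, hdotP] at hp
    have h1 := hdotA x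
    have h2 := hdotA2 x
    nlinarith
  -- gap identity
  have hgap : ∀ x : Fin n → ℝ, f x - f ws = (1 / 2) * ((x - ws) ⬝ᵥ A *ᵥ (x - ws)) := by
    intro x
    have h1 : (x - ws) ⬝ᵥ A *ᵥ (x - ws)
        = x ⬝ᵥ A *ᵥ x - x ⬝ᵥ k - (x ⬝ᵥ k - ws ⬝ᵥ k) := by
      rw [mulVec_sub, hAws, sub_dotProduct, dotProduct_sub, dotProduct_sub, hsymm ws x, hAws]
    have h2 : ws ⬝ᵥ A *ᵥ ws = ws ⬝ᵥ k := by rw [hAws]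
    rw [hf x, hf ws, h1]
    rw [show (Q + β • 1).mulVec x = A *ᵥ x from rfl,
        show (Q + β • 1).mulVec ws = A *ᵥ ws from rfl, h2]
    ring
  have hgapnn : ∀ t, 0 ≤ f (w t) - f ws := by
    intro t
    rw [hgap]
    have h := hApd.posSemidef.dotProduct_mulVec_nonneg (w t - ws)
    rw [star_trivial] at h
    linarith
  -- main step inequality
  have hstep : ∀ t, f (w (t + 1)) - f ws
      ≤ (1 - (σmin + β) / (σmax + β)) * (f (w t) - f ws) := by
    intro t
    by_cases hgz : (Q + β • 1).mulVec (w t) - k = 0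
    · have hw1 : w (t + 1) = w t := (hw t).2 hgz
      have hz : f (w t) - f ws = 0 := by
        rw [hgap]
        have hAv : A *ᵥ (w t - ws) = 0 := by
          rw [mulVec_sub, hAws]; exact hgz
        rw [hAv, dotProduct_zero, mul_zero]
      rw [hw1, hz, mul_zero]
    · have hw1 := (hw t).1 hgz
      set g : Fin n → ℝ := A *ᵥ (w t) - k with hg
      set v : Fin n → ℝ := w t - ws with hv
      have hgv : A *ᵥ v = g := by rw [hv, hg, mulVec_sub, hAws]
      set S : ℝ := g ⬝ᵥ g with hS
      set T : ℝ := g ⬝ᵥ A *ᵥ g with hT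
      have hgz' : g ≠ 0 := hgz
      have hSpos : (0:ℝ) < S := by
        rcases (Finset.sum_nonneg fun i _ => mul_self_nonneg (g i) : (0:ℝ) ≤ S).lt_or_eq
          with h | h
        · exact h
        · exact absurd (dotProduct_self_eq_zero.mp h.symm) hgz'
      have hTpos : (0:ℝ) < T := by
        have := hApd.dotProduct_mulVec_pos hgz'
        rwa [star_trivial] at this
      have hvnew : w (t + 1) - ws = v - (S / T) • g := by
        rw [hw1, hv, sub_right_comm]
      have e1 : (v - (S / T) • g) ⬝ᵥ A *ᵥ (v - (S / T) • g)
          = v ⬝ᵥ A *ᵥ v - 2 * ((S / T) * S) + (S / T) * ((S / T) * T) := by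
        rw [mulVec_sub, mulVec_smul]
        simp only [sub_dotProduct, dotProduct_sub, dotProduct_smul, smul_dotProduct,
          smul_eq_mul]
        rw [hsymm v g, hgv, ← hS, ← hT]
        ring
      have hgapnew : f (w (t + 1)) - f ws = (1 / 2) * (v ⬝ᵥ A *ᵥ v) - (1 / 2) * (S ^ 2 / T) := by
        rw [hgap, hvnew, e1]
        field_simp
        ring
      have hq1 : (σmin + β) * (v ⬝ᵥ A *ᵥ v) ≤ S := by
        have h := L2 v
        have e : v ⬝ᵥ A *ᵥ (A *ᵥ v) = S := by
          rw [hsymm v (A *ᵥ v), hgv, ← hS]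
        rw [e] at h
        exact h
      have hq2 : T ≤ (σmax + β) * S := L1 g
      have hR : 0 ≤ v ⬝ᵥ A *ᵥ v := by
        have h := hApd.posSemidef.dotProduct_mulVec_nonneg v
        rwa [star_trivial] at h
      have hmain : (σmin + β) * (v ⬝ᵥ A *ᵥ v) / (σmax + β) ≤ S ^ 2 / T := by
        rw [div_le_div_iff₀ hMpos hTpos]
        nlinarith [mul_le_mul_of_nonneg_right hq1 hTpos.le,
          mul_le_mul_of_nonneg_left hq2 hSpos.le]
      rw [hgapnew, hgap (w t), ← hv]
      have heq : (1 - (σmin + β) / (σmax + β)) * ((1 / 2) * (v ⬝ᵥ A *ᵥ v))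
          = (1 / 2) * (v ⬝ᵥ A *ᵥ v) - (1 / 2) * ((σmin + β) * (v ⬝ᵥ A *ᵥ v) / (σmax + β)) := by
        ring
      rw [heq]
      linarith
  refine ⟨hstep, ?_⟩
  set r : ℝ := 1 - (σmin + β) / (σmax + β) with hr
  have hr0 : 0 ≤ r := by
    have : (σmin + β) / (σmax + β) ≤ 1 := by
      rw [div_le_one hMpos]; linarith
    rw [hr]; linarith
  have hr1 : r < 1 := by
    have : 0 < (σmin + β) / (σmax + β) := div_pos hmpos hMpos
    rw [hr]; linarith
  have hbound : ∀ t, f (w t) - f ws ≤ r ^ t * (f (w 0) - f ws) := by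
    intro t
    induction t with
    | zero => simp
    | succ t ih =>
      calc f (w (t + 1)) - f ws ≤ r * (f (w t) - f ws) := hstep t
        _ ≤ r * (r ^ t * (f (w 0) - f ws)) := mul_le_mul_of_nonneg_left ih hr0
        _ = r ^ (t + 1) * (f (w 0) - f ws) := by ring
  have htend0 : Filter.Tendsto (fun t => f (w t) - f ws) Filter.atTop (nhds 0) := by
    have h1 : Filter.Tendsto (fun t : ℕ => r ^ t * (f (w 0) - f ws)) Filter.atTop (nhds 0) := by
      have := (tendsto_pow_atTop_nhds_zero_of_lt_one hr0 hr1).mul_const (f (w 0) - f ws)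
      simpa using this
    exact tendsto_of_tendsto_of_tendsto_of_le_of_le tendsto_const_nhds h1 hgapnn hbound
  have h2 : Filter.Tendsto (fun t => (f (w t) - f ws) + f ws) Filter.atTop (nhds (0 + f ws)) :=
    htend0.add tendsto_const_nhds
  simpa using h2
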